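/- Let W be a type of possible worlds, G = (I, ≺, Φ) a priority graph over W, and A ⊆ W. Define the priority graph G' = (Option I, ≺', Φ') where Φ'(none) = A, Φ'(some i) = Φ i, and j ≺' i iff (j = none and i = some i₀ for some i₀ ∈ I) or (j = some j₀, i = some i₀, and j₀ ≺ i₀). Then the relation induced by G' is exactly the radical upgrade of the relation induced by G: for all w, w' ∈ W, w ≤_{G'} w' iff w (≤_G)_{⇑A} w'. (The radical upgrade operation on preference models is definable as an operation on priority graphs: prefixing the announced formula as a new highest-priority node.) -/

import Mathlib

/-- The relation on worlds induced by a priority graph `(I, prec, Φ)`. -/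
def inducedLe {W I : Type*} (prec : I → I → Prop) (Φ : I → Set W) (w w' : W) : Prop :=
  ∀ i : I, (w' ∈ Φ i → w ∈ Φ i) ∨ ∃ j : I, prec j i ∧ w ∈ Φ j ∧ w' ∉ Φ j

/-- The radical upgrade of a relation `le` on worlds by a set `A` of worlds. -/
def radicalUpgrade {W : Type*} (le : W → W → Prop) (A : Set W) (w w' : W) : Prop :=
  (w ∈ A ∧ w' ∉ A) ∨ (le w w' ∧ ¬ (w ∉ A ∧ w' ∈ A))

/-- The priority order of the graph `G'` obtained from `G = (I, prec, Φ)` by prefixing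
a new node (`none`) above all original nodes: `j ≺' i` iff `j = none` and `i` is an
original node, or both are original nodes `j₀ ≺ i₀`. -/
def prefixPrec {I : Type*} (prec : I → I → Prop) (j i : Option I) : Prop :=
  (j = none ∧ ∃ i₀ : I, i = some i₀) ∨
  (∃ j₀ i₀ : I, j = some j₀ ∧ i = some i₀ ∧ prec j₀ i₀)

/-- The assignment of the prefixed graph: the new node `none` carries the announced
set `A`, the original nodes keep their sets. -/
def prefixPhi {W I : Type*} (Φ : I → Set W) (A : Set W) : Option I → Set W
  | none => A
  | some i => Φ i

/-- radical upgrade on preference models is definable on priority graphs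
by prefixing the announced formula as a new highest-priority node: the relation induced
by the prefixed graph `G'` is exactly the radical upgrade by `A` of the relation
induced by `G`. -/
theorem inducedLe_prefix_eq_radicalUpgrade {W I : Type*}
    (prec : I → I → Prop) (Φ : I → Set W) (A : Set W)
    (hirr : ∀ i : I, ¬ prec i i)
    (htrans : ∀ i j k : I, prec i j → prec j k → prec i k) :
    ∀ w w' : W,
      inducedLe (prefixPrec prec) (prefixPhi Φ A) w w' ↔
        radicalUpgrade (inducedLe prec Φ) A w w' := by
  intro w w'
  constructor
  · intro h
    by_cases hcase : w ∈ A ∧ w' ∉ A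
    · exact Or.inl hcase
    · refine Or.inr ⟨?_, ?_⟩
      · intro i₀
        rcases h (some i₀) with h1 | ⟨j, hj, hwj, hw'j⟩
        · exact Or.inl h1
        · cases j with
          | none => exact absurd ⟨hwj, hw'j⟩ hcase
          | some j₀ =>
            rcases hj with ⟨hn, _⟩ | ⟨a, b, ha, hb, hab⟩
            · exact absurd hn (by simp)
            · cases Option.some.inj ha; cases Option.some.inj hb
              exact Or.inr ⟨j₀, hab, hwj, hw'j⟩
      · rintro ⟨hwA, hw'A⟩
        rcases h none with h1 | ⟨j, hj, _, _⟩
        · exact hwA (h1 hw'A)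
        · rcases hj with ⟨_, i₀, hi⟩ | ⟨_, i₀, _, hi, _⟩ <;> exact Option.some_ne_none _ hi.symm
  · rintro (⟨hwA, hw'A⟩ | ⟨hle, hne⟩) <;> intro i
    · cases i with
      | none => exact Or.inl fun h => absurd h hw'A
      | some i₀ => exact Or.inr ⟨none, Or.inl ⟨rfl, i₀, rfl⟩, hwA, hw'A⟩
    · cases i with
      | none =>
        refine Or.inl fun h => ?_
        by_contra hw
        exact hne ⟨hw, h⟩
      | some i₀ =>
        rcases hle i₀ with h1 | ⟨j₀, hj, hwj, hw'j⟩
        · exact Or.inl h1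
        · exact Or.inr ⟨some j₀, Or.inr ⟨j₀, i₀, rfl, rfl, hj⟩, hwj, hw'j⟩
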